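/- The uncertainty coefficient is strictly positive: there exists ε > 0 such that every density matrix ρ satisfies G_XP(ρ) ≤ 2(d − 1)/(d + 1) − ε; equivalently, the supremum of G_XP over all density matrices is strictly less than 2(d − 1)/(d + 1). -/

import Mathlib

open Matrix
open scoped ComplexOrder

noncomputable section

/-- The Lorenz values of `p : Fin d → ℝ`, computed with the sorting permutation `Tuple.sort p`
(they are independent of the choice of sorting permutation):
`L(p, ℓ) = ∑_{k=0}^{ℓ} p (π k)` where `π` arranges the values of `p` in ascending order. -/
def lorenzF {d : ℕ} (p : Fin d → ℝ) (ℓ : Fin d) : ℝ :=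
  ∑ k ∈ Finset.Iic ℓ, p (Tuple.sort p k)

/-- The Gini index of `p : Fin d → ℝ`: `G(p) = 1 − (2/(d+1)) · ∑_{ℓ=0}^{d−1} L(p, ℓ)`. -/
def giniF {d : ℕ} (p : Fin d → ℝ) : ℝ :=
  1 - (2 / ((d : ℝ) + 1)) * ∑ ℓ : Fin d, lorenzF p ℓ

/-- The Gini index of a function `p : ZMod d → ℝ`, obtained by reindexing along the
bijection `Fin d → ZMod d`, `k ↦ (k : ZMod d)`. -/
def gini {d : ℕ} [NeZero d] (p : ZMod d → ℝ) : ℝ :=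
  giniF (fun k : Fin d => p ((k : ℕ) : ZMod d))

/-- A density matrix: positive semidefinite with trace 1. -/
def IsDensityMatrix {d : ℕ} [NeZero d] (ρ : Matrix (ZMod d) (ZMod d) ℂ) : Prop :=
  ρ.PosSemidef ∧ ρ.trace = 1

/-- The position distribution of `ρ`: `P_X(ρ) r = Re(ρ r r)`. -/
def PX {d : ℕ} [NeZero d] (ρ : Matrix (ZMod d) (ZMod d) ℂ) : ZMod d → ℝ :=
  fun r => (ρ r r).re

/-- `ω = exp(2πi/d)`. -/
def omega (d : ℕ) : ℂ := Complex.exp (2 * Real.pi * Complex.I / d)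

/-- The Fourier matrix `F r s = ω^{(r·s).val} / √d`. -/
def Fmat (d : ℕ) [NeZero d] : Matrix (ZMod d) (ZMod d) ℂ :=
  Matrix.of fun r s : ZMod d => omega d ^ (r * s).val / (Real.sqrt d : ℂ)

/-- The momentum distribution of `ρ`: `P_P(ρ) r = Re((Fᴴ ρ F) r r)`. -/
def PP {d : ℕ} [NeZero d] (ρ : Matrix (ZMod d) (ZMod d) ℂ) : ZMod d → ℝ :=
  fun r => (((Fmat d)ᴴ * ρ * Fmat d) r r).re

/-- `G_X(ρ) = G(P_X(ρ))`. -/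
def GX {d : ℕ} [NeZero d] (ρ : Matrix (ZMod d) (ZMod d) ℂ) : ℝ := gini (PX ρ)

/-- `G_P(ρ) = G(P_P(ρ))`. -/
def GP {d : ℕ} [NeZero d] (ρ : Matrix (ZMod d) (ZMod d) ℂ) : ℝ := gini (PP ρ)

/-- `G_XP(ρ) = G_X(ρ) + G_P(ρ)`. -/
def GXP {d : ℕ} [NeZero d] (ρ : Matrix (ZMod d) (ZMod d) ℂ) : ℝ := GX ρ + GP ρ

end

section MainProof

open Finset
open scoped InnerProductSpace

variable {d : ℕ} [NeZero d]

lemma bij_finZMod : Function.Bijective (fun k : Fin d => ((k : ℕ) : ZMod d)) := by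
  have h : ∀ k : Fin d, (((k : ℕ) : ZMod d)).val = (k : ℕ) :=
    fun k => ZMod.val_natCast_of_lt k.isLt
  refine (Fintype.bijective_iff_injective_and_card _).mpr ⟨fun a b hab => ?_, by simp [ZMod.card]⟩
  apply Fin.ext
  rw [← h a, ← h b]
  simp only at hab
  rw [hab]

lemma omega_prim : IsPrimitiveRoot (omega d) d :=
  Complex.isPrimitiveRoot_exp d (NeZero.ne d)

lemma omega_pow_mod (n : ℕ) : omega d ^ (n % d) = omega d ^ n := by
  conv_rhs => rw [← Nat.mod_add_div n d]
  rw [pow_add, pow_mul, omega_prim.pow_eq_one, one_pow, mul_one]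

omit [NeZero d] in
lemma omega_abs : ‖omega d‖ = 1 := by
  rw [omega, show (2 * (Real.pi : ℂ) * Complex.I / d) = ((2 * Real.pi / d : ℝ) : ℂ) * Complex.I by
    push_cast; ring]
  exact Complex.norm_exp_ofReal_mul_I _

lemma omega_val_add (a b : ZMod d) :
    omega d ^ (a + b).val = omega d ^ a.val * omega d ^ b.val := by
  rw [← pow_add, ZMod.val_add, omega_pow_mod]

lemma conj_omega_val (a : ZMod d) :
    (starRingEnd ℂ) (omega d ^ a.val) = omega d ^ (-a).val := by
  have h1 : omega d ^ a.val * omega d ^ (-a).val = 1 := by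
    rw [← omega_val_add, add_neg_cancel]
    simp [ZMod.val_zero]
  have h2 : (starRingEnd ℂ) (omega d ^ a.val) * (omega d ^ a.val) = 1 := by
    rw [mul_comm, Complex.mul_conj']
    norm_cast
    simp [Complex.normSq_eq_norm_sq, omega_abs]
  calc (starRingEnd ℂ) (omega d ^ a.val)
      = (starRingEnd ℂ) (omega d ^ a.val) * (omega d ^ a.val * omega d ^ (-a).val) := by
        rw [h1, mul_one]
    _ = ((starRingEnd ℂ) (omega d ^ a.val) * omega d ^ a.val) * omega d ^ (-a).val := by ring
    _ = omega d ^ (-a).val := by rw [h2, one_mul]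

lemma char_sum_zero {m : ZMod d} (hm : m ≠ 0) :
    ∑ y : ZMod d, omega d ^ (m * y).val = 0 := by
  have key : ∀ y : ZMod d, omega d ^ (m * y).val = (omega d ^ m.val) ^ y.val := by
    intro y
    rw [← pow_mul, ZMod.val_mul, omega_pow_mod]
  rw [Finset.sum_congr rfl fun y _ => key y]
  have hre : ∑ y : ZMod d, (omega d ^ m.val) ^ y.val
      = ∑ k : Fin d, (omega d ^ m.val) ^ (k : ℕ) := by
    rw [← Fintype.sum_bijective _ (bij_finZMod (d := d)) _ _ (fun k => ?_)]
    rw [ZMod.val_natCast_of_lt k.isLt]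
  rw [hre, Fin.sum_univ_eq_sum_range, geom_sum_eq, ← pow_mul, mul_comm, pow_mul,
    omega_prim.pow_eq_one, one_pow, sub_self, zero_div]
  exact omega_prim.pow_ne_one_of_pos_of_lt
    (fun h => hm ((ZMod.val_eq_zero m).mp h)) (ZMod.val_lt m)

omit [NeZero d] in
lemma sqrt_d_sq : (Real.sqrt d : ℂ) * (Real.sqrt d : ℂ) = (d : ℂ) := by
  norm_cast
  exact Real.mul_self_sqrt (Nat.cast_nonneg d)

lemma F_mul_Fconj : Fmat d * (Fmat d)ᴴ = (1 : Matrix (ZMod d) (ZMod d) ℂ) := by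
  have hd0 : (d : ℂ) ≠ 0 := Nat.cast_ne_zero.mpr (NeZero.ne d)
  have hs0 : (Real.sqrt d : ℂ) ≠ 0 := by
    intro h
    apply hd0
    rw [← sqrt_d_sq (d := d), h, mul_zero]
  ext r s
  simp only [Matrix.mul_apply, conjTranspose_apply, Fmat, Matrix.of_apply, star_div₀,
    Complex.star_def, conj_omega_val, Complex.conj_ofReal]
  have hterm : ∀ y : ZMod d,
      omega d ^ (r * y).val / (Real.sqrt d : ℂ) * (omega d ^ (-(s * y)).val / (Real.sqrt d : ℂ))
        = omega d ^ ((r - s) * y).val / (d : ℂ) := by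
    intro y
    rw [div_mul_div_comm, ← omega_val_add, sqrt_d_sq]
    congr 2
    ring_nf
  rw [Finset.sum_congr rfl fun y _ => hterm y, ← Finset.sum_div]
  by_cases h : r = s
  · subst h
    simp only [sub_self, zero_mul, ZMod.val_zero, pow_zero, Finset.sum_const, Finset.card_univ,
      ZMod.card, nsmul_eq_mul, mul_one]
    rw [div_self hd0, Matrix.one_apply_eq]
  · rw [char_sum_zero (sub_ne_zero_of_ne h), zero_div, Matrix.one_apply_ne h]

lemma inner_two_vec {E : Type*} [NormedAddCommGroup E] [InnerProductSpace ℂ E]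
    (e f v : E) (he : ‖e‖ = 1) (hf : ‖f‖ = 1) {c : ℝ} (hc : 0 ≤ c)
    (hef : ‖(inner ℂ e f : ℂ)‖ ≤ c) :
    ‖(inner ℂ e v : ℂ)‖ ^ 2 + ‖(inner ℂ f v : ℂ)‖ ^ 2 ≤ (1 + c) * ‖v‖ ^ 2 := by
  set a : ℂ := inner ℂ e v with ha
  set b : ℂ := inner ℂ f v with hb
  set T : ℝ := ‖a‖ ^ 2 + ‖b‖ ^ 2 with hT
  have hc1 : (0:ℝ) < 1 + c := by linarith
  set s : ℝ := (1 + c)⁻¹ with hs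
  have hs0 : 0 < s := inv_pos.mpr hc1
  have hsc : s * (1 + c) = 1 := inv_mul_cancel₀ (ne_of_gt hc1)
  set w : E := ((s : ℂ)) • (a • e + b • f) with hw
  have hvw : Complex.re (inner ℂ v w : ℂ) = s * T := by
    rw [hw, inner_smul_right, inner_add_right, inner_smul_right, inner_smul_right,
      ← inner_conj_symm v e, ← inner_conj_symm v f, ← ha, ← hb,
      Complex.mul_conj', Complex.mul_conj']
    have hcast : ((s : ℂ) * ((‖a‖ : ℂ) ^ 2 + (‖b‖ : ℂ) ^ 2))
        = (((s * (‖a‖ ^ 2 + ‖b‖ ^ 2) : ℝ)) : ℂ) := by push_cast; ring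
    rw [hcast, Complex.ofReal_re, hT]
  have hnw : ‖w‖ ^ 2 ≤ s ^ 2 * ((1 + c) * T) := by
    have h1 : ‖w‖ ^ 2 = s ^ 2 * ‖a • e + b • f‖ ^ 2 := by
      rw [hw, norm_smul]
      simp [mul_pow, abs_of_pos hs0]
    have h2 : ‖a • e + b • f‖ ^ 2 ≤ (1 + c) * T := by
      have hexp := norm_add_sq (𝕜 := ℂ) (a • e) (b • f)
      simp only [RCLike.re_to_complex] at hexp
      have hie : (inner ℂ (a • e) (b • f) : ℂ) = (starRingEnd ℂ) a * b * inner ℂ e f := by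
        rw [inner_smul_left, inner_smul_right]; ring
      have hre : Complex.re (inner ℂ (a • e) (b • f) : ℂ) ≤ ‖a‖ * ‖b‖ * c := by
        calc Complex.re (inner ℂ (a • e) (b • f) : ℂ) ≤ ‖(inner ℂ (a • e) (b • f) : ℂ)‖ :=
              Complex.re_le_norm _
          _ = ‖a‖ * ‖b‖ * ‖(inner ℂ e f : ℂ)‖ := by
              rw [hie]; simp [norm_mul]
          _ ≤ ‖a‖ * ‖b‖ * c := mul_le_mul_of_nonneg_left hef (by positivity)
      have hab : ‖a‖ * ‖b‖ ≤ T / 2 := by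
        nlinarith [sq_nonneg (‖a‖ - ‖b‖)]
      have h3 : ‖a • e + b • f‖ ^ 2 ≤ ‖a‖ ^ 2 + 2 * (‖a‖ * ‖b‖ * c) + ‖b‖ ^ 2 := by
        rw [hexp, norm_smul, norm_smul, he, hf]
        simp only [mul_one]
        nlinarith [hre]
      nlinarith [h3, hab, hc]
    calc ‖w‖ ^ 2 = s ^ 2 * ‖a • e + b • f‖ ^ 2 := h1
      _ ≤ s ^ 2 * ((1 + c) * T) := by nlinarith [sq_nonneg s, h2]
  have h0 : (0:ℝ) ≤ ‖v - w‖ ^ 2 := sq_nonneg _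
  rw [norm_sub_sq (𝕜 := ℂ)] at h0
  simp only [RCLike.re_to_complex] at h0
  have hfin : s * T ≤ ‖v‖ ^ 2 := by
    have hss : s ^ 2 * ((1 + c) * T) = s * T := by
      rw [pow_two]
      calc s * s * ((1 + c) * T) = s * (s * (1 + c)) * T := by ring
        _ = s * T := by rw [hsc]; ring
    nlinarith [h0, hnw, hvw]
  calc T = (s * (1 + c)) * T := by rw [hsc, one_mul]
    _ = (1 + c) * (s * T) := by ring
    _ ≤ (1 + c) * ‖v‖ ^ 2 := mul_le_mul_of_nonneg_left hfin (le_of_lt hc1)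

lemma sqrt_d_pos : 0 < Real.sqrt d := by
  apply Real.sqrt_pos.mpr
  exact_mod_cast Nat.pos_of_ne_zero (NeZero.ne d)

lemma Fmat_abs (r s : ZMod d) : ‖Fmat d r s‖ = (Real.sqrt d)⁻¹ := by
  have h1 : (0:ℝ) < Real.sqrt d := sqrt_d_pos
  simp [Fmat, norm_div, norm_pow, omega_abs, Complex.norm_real, Real.norm_eq_abs, abs_of_pos h1]

lemma diag_re_repr (B : Matrix (ZMod d) (ZMod d) ℂ) (x : ZMod d) :
    ((Bᴴ * B) x x).re = ∑ k : ZMod d, Complex.normSq (B k x) := by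
  have h : (Bᴴ * B) x x = ∑ k : ZMod d, (starRingEnd ℂ) (B k x) * B k x := by
    simp [Matrix.mul_apply, conjTranspose_apply]
  rw [h, Complex.re_sum]
  refine Finset.sum_congr rfl fun k _ => ?_
  rw [mul_comm, Complex.mul_conj, Complex.ofReal_re]

lemma PP_repr (B : Matrix (ZMod d) (ZMod d) ℂ) (y : ZMod d) :
    PP (Bᴴ * B) y = ∑ k : ZMod d, Complex.normSq ((B * Fmat d) k y) := by
  have hmat : (Fmat d)ᴴ * (Bᴴ * B) * Fmat d = (B * Fmat d)ᴴ * (B * Fmat d) := by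
    simp only [conjTranspose_mul, Matrix.mul_assoc]
  rw [PP, hmat, diag_re_repr]

lemma PX_repr (B : Matrix (ZMod d) (ZMod d) ℂ) (x : ZMod d) :
    PX (Bᴴ * B) x = ∑ k : ZMod d, Complex.normSq (B k x) := diag_re_repr B x

lemma psd_eq_conjTranspose_mul_self {ρ : Matrix (ZMod d) (ZMod d) ℂ} (hρ : ρ.PosSemidef) :
    ∃ B : Matrix (ZMod d) (ZMod d) ℂ, ρ = Bᴴ * B := by
  open scoped MatrixOrder in
  obtain ⟨B, hB⟩ := CStarAlgebra.nonneg_iff_eq_star_mul_self.mp hρ.nonneg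
  exact ⟨B, hB⟩

lemma PX_nonneg {ρ : Matrix (ZMod d) (ZMod d) ℂ} (hρ : ρ.PosSemidef) (x : ZMod d) :
    0 ≤ PX ρ x := by
  obtain ⟨B, rfl⟩ := psd_eq_conjTranspose_mul_self hρ
  rw [PX_repr]
  exact Finset.sum_nonneg fun k _ => Complex.normSq_nonneg _

lemma PP_nonneg {ρ : Matrix (ZMod d) (ZMod d) ℂ} (hρ : ρ.PosSemidef) (y : ZMod d) :
    0 ≤ PP ρ y := by
  obtain ⟨B, rfl⟩ := psd_eq_conjTranspose_mul_self hρ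
  rw [PP_repr]
  exact Finset.sum_nonneg fun k _ => Complex.normSq_nonneg _

lemma PX_sum {ρ : Matrix (ZMod d) (ZMod d) ℂ} (ht : ρ.trace = 1) :
    ∑ x : ZMod d, PX ρ x = 1 := by
  have : ∑ x : ZMod d, PX ρ x = (ρ.trace).re := by
    rw [Matrix.trace, Complex.re_sum]; rfl
  rw [this, ht, Complex.one_re]

lemma PP_sum {ρ : Matrix (ZMod d) (ZMod d) ℂ} (ht : ρ.trace = 1) :
    ∑ y : ZMod d, PP ρ y = 1 := by
  have htr : ((Fmat d)ᴴ * ρ * Fmat d).trace = 1 := by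
    rw [Matrix.trace_mul_cycle, F_mul_Fconj, Matrix.one_mul, ht]
  have : ∑ y : ZMod d, PP ρ y = (((Fmat d)ᴴ * ρ * Fmat d).trace).re := by
    rw [Matrix.trace, Complex.re_sum]; rfl
  rw [this, htr, Complex.one_re]

lemma key_bound {ρ : Matrix (ZMod d) (ZMod d) ℂ} (hρ : ρ.PosSemidef) (ht : ρ.trace = 1)
    (x y : ZMod d) : PX ρ x + PP ρ y ≤ 1 + (Real.sqrt d)⁻¹ := by
  obtain ⟨B, rfl⟩ := psd_eq_conjTranspose_mul_self hρ
  set c : ℝ := (Real.sqrt d)⁻¹ with hcdef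
  have hc : 0 ≤ c := by positivity
  set e : EuclideanSpace ℂ (ZMod d) := EuclideanSpace.single x (1:ℂ) with he_def
  set f : EuclideanSpace ℂ (ZMod d) := WithLp.toLp 2 (fun s => Fmat d s y) with hf_def
  have hsd : (0:ℝ) < Real.sqrt d := sqrt_d_pos
  have hdpos : (0:ℝ) < d := by
    exact_mod_cast Nat.pos_of_ne_zero (NeZero.ne d)
  have he : ‖e‖ = 1 := by rw [he_def, EuclideanSpace.norm_single, norm_one]
  have hf : ‖f‖ = 1 := by
    rw [EuclideanSpace.norm_eq]
    have : ∀ s : ZMod d, ‖f s‖ ^ 2 = (d : ℝ)⁻¹ := by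
      intro s
      rw [hf_def]
      simp only
      rw [Fmat_abs, ← hcdef]
      rw [hcdef, inv_pow, Real.sq_sqrt (le_of_lt hdpos)]
    rw [Finset.sum_congr rfl fun s _ => this s]
    simp only [Finset.sum_const, Finset.card_univ, ZMod.card, nsmul_eq_mul]
    rw [mul_inv_cancel₀ (ne_of_gt hdpos), Real.sqrt_one]
  have hef : ‖(inner ℂ e f : ℂ)‖ ≤ c := by
    rw [he_def, EuclideanSpace.inner_single_left]
    simp only [hf_def, _root_.map_one, one_mul]
    rw [Fmat_abs]
  have hrow : ∀ k : ZMod d,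
      Complex.normSq (B k x) + Complex.normSq ((B * Fmat d) k y)
        ≤ (1 + c) * ∑ s : ZMod d, Complex.normSq (B k s) := by
    intro k
    set u : EuclideanSpace ℂ (ZMod d) := WithLp.toLp 2 (fun s => (starRingEnd ℂ) (B k s)) with hu_def
    have h1 : (inner ℂ e u : ℂ) = (starRingEnd ℂ) (B k x) := by
      rw [he_def, EuclideanSpace.inner_single_left, _root_.map_one, one_mul]
    have h2 : (inner ℂ f u : ℂ) = (starRingEnd ℂ) ((B * Fmat d) k y) := by
      rw [PiLp.inner_apply]
      rw [Matrix.mul_apply, map_sum]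
      refine Finset.sum_congr rfl fun s _ => ?_
      simp only [hf_def, hu_def, RCLike.inner_apply, RingHom.map_mul, starRingEnd_apply]
    have h3 : ‖u‖ ^ 2 = ∑ s : ZMod d, Complex.normSq (B k s) := by
      rw [EuclideanSpace.norm_eq, Real.sq_sqrt (Finset.sum_nonneg fun s _ => sq_nonneg _)]
      refine Finset.sum_congr rfl fun s _ => ?_
      rw [hu_def]
      simp only
      rw [Complex.norm_conj, Complex.sq_norm]
    have := inner_two_vec e f u he hf hc hef
    rw [h1, h2, h3] at this
    simpa [Complex.norm_conj, Complex.sq_norm] using this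
  have htr : ∑ k : ZMod d, ∑ s : ZMod d, Complex.normSq (B k s) = 1 := by
    have h4 : ∑ s : ZMod d, PX (Bᴴ * B) s = 1 := PX_sum ht
    rw [Finset.sum_congr rfl fun s (_ : s ∈ Finset.univ) => PX_repr B s] at h4
    rw [Finset.sum_comm]
    exact h4
  have hsum := Finset.sum_le_sum fun k (_ : k ∈ Finset.univ) => hrow k
  rw [← Finset.mul_sum, htr, mul_one] at hsum
  rw [Finset.sum_add_distrib] at hsum
  rw [PX_repr, PP_repr]
  exact hsum

lemma gini_le (hd : 2 ≤ d) {p : ZMod d → ℝ}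
    (hp0 : ∀ x, 0 ≤ p x) (hp1 : ∑ x : ZMod d, p x = 1) :
    ∃ x0 : ZMod d, gini p ≤ 1 - (2 / ((d : ℝ) + 1)) * (2 - p x0) := by
  set q : Fin d → ℝ := fun k => p ((k : ℕ) : ZMod d) with hq
  have hq0 : ∀ k, 0 ≤ q k := fun k => hp0 _
  have hq1 : ∑ k : Fin d, q k = 1 := by
    rw [← hp1]
    exact Fintype.sum_bijective _ (bij_finZMod (d := d)) _ _ (fun k => rfl)
  set σ := Tuple.sort q with hσ
  have hlast : d - 1 < d := by omega
  have hpen : d - 2 < d := by omega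
  set last : Fin d := ⟨d - 1, hlast⟩ with hlastdef
  set pen : Fin d := ⟨d - 2, hpen⟩ with hpendef
  have hne : pen ≠ last := by
    simp only [hpendef, hlastdef, ne_eq, Fin.mk.injEq]
    omega
  have hIicLast : Finset.Iic last = Finset.univ := by
    ext k
    simp only [Finset.mem_Iic, Finset.mem_univ, iff_true]
    have h1 : k ≤ last ↔ (k : ℕ) ≤ d - 1 := Iff.rfl
    rw [h1]
    have := k.isLt
    omega
  have hIicPen : Finset.Iic pen = Finset.univ.erase last := by
    ext k
    simp only [Finset.mem_Iic, Finset.mem_erase, Finset.mem_univ, and_true, ne_eq]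
    have h1 : k ≤ pen ↔ (k : ℕ) ≤ d - 2 := Iff.rfl
    have h2 : k = last ↔ (k : ℕ) = d - 1 := by rw [Fin.ext_iff]
    rw [h1, h2]
    have := k.isLt
    omega
  have hLlast : lorenzF q last = 1 := by
    rw [lorenzF, hIicLast, ← hq1]
    exact Equiv.sum_comp σ q
  have hLpen : lorenzF q pen = 1 - q (σ last) := by
    rw [lorenzF, hIicPen, Finset.sum_erase_eq_sub (Finset.mem_univ last), ← hσ]
    congr 1
    rw [← hq1]
    exact Equiv.sum_comp σ q
  have hLnonneg : ∀ ℓ : Fin d, 0 ≤ lorenzF q ℓ :=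
    fun ℓ => Finset.sum_nonneg fun k _ => hq0 _
  have hsum : 2 - q (σ last) ≤ ∑ ℓ : Fin d, lorenzF q ℓ := by
    have hsub : ({pen, last} : Finset (Fin d)) ⊆ Finset.univ := Finset.subset_univ _
    have h1 := Finset.sum_le_sum_of_subset_of_nonneg hsub
      (fun ℓ _ _ => hLnonneg ℓ)
    rw [Finset.sum_pair hne, hLpen, hLlast] at h1
    linarith
  refine ⟨(((σ last : Fin d) : ℕ) : ZMod d), ?_⟩
  have hval : q (σ last) = p (((σ last : Fin d) : ℕ) : ZMod d) := rfl
  have ht : (0:ℝ) ≤ 2 / ((d : ℝ) + 1) := by positivity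
  have hgini : gini p = giniF q := rfl
  rw [hgini, giniF, ← hval]
  have := mul_le_mul_of_nonneg_left hsum ht
  linarith

end MainProof

/-- The uncertainty coefficient is strictly positive: there exists `ε > 0` such
that every density matrix `ρ` satisfies `G_XP(ρ) ≤ 2(d − 1)/(d + 1) − ε`; equivalently, the
supremum of `G_XP` over all density matrices is strictly less than `2(d − 1)/(d + 1)`. -/
theorem uncertainty_coefficient_pos {d : ℕ} [NeZero d] (hd : 2 ≤ d) :
    (∃ ε : ℝ, 0 < ε ∧ ∀ ρ : Matrix (ZMod d) (ZMod d) ℂ, IsDensityMatrix ρ →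
        GXP ρ ≤ 2 * (((d : ℝ) - 1) / ((d : ℝ) + 1)) - ε) ∧
    sSup {x : ℝ | ∃ ρ : Matrix (ZMod d) (ZMod d) ℂ, IsDensityMatrix ρ ∧ GXP ρ = x} <
      2 * (((d : ℝ) - 1) / ((d : ℝ) + 1)) := by
  have hdpos : (0:ℝ) < d := by exact_mod_cast Nat.pos_of_ne_zero (NeZero.ne d)
  have hD : (0:ℝ) < (d:ℝ) + 1 := by linarith
  set c : ℝ := (Real.sqrt d)⁻¹ with hc
  have hc0 : 0 ≤ c := by positivity
  have hc1 : c < 1 := by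
    rw [hc]
    have h1 : (1:ℝ) < Real.sqrt d := by
      rw [show (1:ℝ) = Real.sqrt 1 from (Real.sqrt_one).symm]
      apply Real.sqrt_lt_sqrt (by norm_num)
      exact_mod_cast hd
    have : Real.sqrt 1 < Real.sqrt d := by
      apply Real.sqrt_lt_sqrt (by norm_num)
      have : (2:ℝ) ≤ (d:ℝ) := by exact_mod_cast hd
      linarith
    exact inv_lt_one_of_one_lt₀ h1
  set ε : ℝ := 2 * (1 - c) / ((d:ℝ) + 1) with hε
  have hεpos : 0 < ε := by
    rw [hε]
    apply div_pos
    · linarith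
    · linarith
  have hbound : ∀ ρ : Matrix (ZMod d) (ZMod d) ℂ, IsDensityMatrix ρ →
      GXP ρ ≤ 2 * (((d : ℝ) - 1) / ((d : ℝ) + 1)) - ε := by
    intro ρ hρ
    obtain ⟨hpsd, htr⟩ := hρ
    obtain ⟨x0, hx0⟩ := gini_le hd (PX_nonneg hpsd) (PX_sum htr)
    obtain ⟨y0, hy0⟩ := gini_le hd (PP_nonneg hpsd) (PP_sum htr)
    have hk := key_bound hpsd htr x0 y0
    have ht0 : (0:ℝ) ≤ 2 / ((d:ℝ) + 1) := by positivity
    have hmono : (2/((d:ℝ)+1)) * (3 - c) ≤ (2/((d:ℝ)+1)) * (4 - (PX ρ x0 + PP ρ y0)) :=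
      mul_le_mul_of_nonneg_left (by rw [← hc] at hk; linarith) ht0
    have hsplit : (2/((d:ℝ)+1)) * (2 - PX ρ x0) + (2/((d:ℝ)+1)) * (2 - PP ρ y0)
        = (2/((d:ℝ)+1)) * (4 - (PX ρ x0 + PP ρ y0)) := by ring
    have heq : 2 * (((d:ℝ) - 1) / ((d:ℝ) + 1)) - ε = 2 - (2/((d:ℝ)+1)) * (3 - c) := by
      rw [hε]
      field_simp
      ring
    have hGXP : GXP ρ = gini (PX ρ) + gini (PP ρ) := rfl
    rw [hGXP, heq]
    linarith [hx0, hy0, hmono, hsplit]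
  refine ⟨⟨ε, hεpos, hbound⟩, ?_⟩
  set ρ0 : Matrix (ZMod d) (ZMod d) ℂ := Matrix.diagonal (fun _ : ZMod d => (d:ℂ)⁻¹) with hρ0def
  have hdC : (d:ℂ) ≠ 0 := Nat.cast_ne_zero.mpr (NeZero.ne d)
  have hρ0 : IsDensityMatrix ρ0 := by
    constructor
    · apply Matrix.posSemidef_diagonal_iff.mpr
      intro i
      rw [show ((d:ℂ))⁻¹ = (((d:ℝ)⁻¹ : ℝ) : ℂ) by push_cast; ring]
      exact Complex.zero_le_real.mpr (by positivity)
    · rw [hρ0def, Matrix.trace_diagonal]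
      simp only [Finset.sum_const, Finset.card_univ, ZMod.card, nsmul_eq_mul]
      exact mul_inv_cancel₀ hdC
  have hSne : {x : ℝ | ∃ ρ : Matrix (ZMod d) (ZMod d) ℂ, IsDensityMatrix ρ ∧ GXP ρ = x}.Nonempty :=
    ⟨GXP ρ0, ρ0, hρ0, rfl⟩
  have hub : sSup {x : ℝ | ∃ ρ : Matrix (ZMod d) (ZMod d) ℂ, IsDensityMatrix ρ ∧ GXP ρ = x}
      ≤ 2 * (((d : ℝ) - 1) / ((d : ℝ) + 1)) - ε := by
    apply csSup_le hSne
    rintro z ⟨ρ, hρ, rfl⟩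
    exact hbound ρ hρ
  linarith
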